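/- Let P(r,n;A,D,Γ) and P(r',n';A',D',Γ') be pentads of Cartan type such that rank D = n and rank D' = n'. If these pentads are equivalent, then r = r', n = n', and there exist a nonzero complex number c, a permutation π of {1,…,n} with permutation matrix E_π = (δ_{i,π(i)}), and an invertible matrix T ∈ M(r,r;ℂ) such that A = (1/c)·ᵗT^{−1}·A'·T^{−1} and D = T·D'·ᵗE_π. -/

import Mathlib

noncomputable section

open Matrix

/-- The representation `□_D^r` of the abelian Lie algebra `ℂ^r` on `ℂ_D^Γ = ℂⁿ`:
`□_D^r(ε_i ⊗ e_j) = d_{ij} e_j`. -/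
def boxD {r n : ℕ} (D : Matrix (Fin r) (Fin n) ℂ) (a : Fin r → ℂ) (v : Fin n → ℂ) :
    Fin n → ℂ :=
  fun j => (∑ i, a i * D i j) * v j

/-- The representation `□_{-D}^r` of `ℂ^r` on `ℂ_{-D}^Γ = ℂⁿ`:
`□_{-D}^r(ε_i ⊗ f_j) = -d_{ij} f_j`. -/
def boxNegD {r n : ℕ} (D : Matrix (Fin r) (Fin n) ℂ) (a : Fin r → ℂ) (φ : Fin n → ℂ) :
    Fin n → ℂ :=
  fun j => -((∑ i, a i * D i j) * φ j)

/-- The pairing `⟨e_i, f_j⟩_D^Γ = δ_{ij} γ_i`. -/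
def pairG {n : ℕ} (γ : Fin n → ℂ) (v φ : Fin n → ℂ) : ℂ :=
  ∑ j, γ j * (v j * φ j)

/-- The bilinear form `B_A(x, y) = ᵗx · ᵗA⁻¹ · y` on `ℂ^r`. -/
def bilinA {r : ℕ} (A : Matrix (Fin r) (Fin r) ℂ) (x y : Fin r → ℂ) : ℂ :=
  x ⬝ᵥ ((A⁻¹)ᵀ *ᵥ y)

/-- `h_i`, the `i`-th column of `ᵗA · D · Γ`. -/
def hvec {r n : ℕ} (A : Matrix (Fin r) (Fin r) ℂ) (D : Matrix (Fin r) (Fin n) ℂ)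
    (γ : Fin n → ℂ) (i : Fin n) : Fin r → ℂ :=
  fun k => (Aᵀ * D * Matrix.diagonal γ) k i

/-- The Cartan matrix `C(A, D, Γ) = Γ · ᵗD · A · D` of the pentad of Cartan type
`P(r, n; A, D, Γ)`. -/
def cartanC {r n : ℕ} (A : Matrix (Fin r) (Fin r) ℂ) (D : Matrix (Fin r) (Fin n) ℂ)
    (γ : Fin n → ℂ) : Matrix (Fin n) (Fin n) ℂ :=
  Matrix.diagonal γ * Dᵀ * A * D

/-- The permutation matrix `E_π = (δ_{j, π i})_{ij}`. -/
def permMat {n : ℕ} (π : Equiv.Perm (Fin n)) : Matrix (Fin n) (Fin n) ℂ :=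
  fun i j => if j = π i then 1 else 0

/-- The annihilator `Ann ℂ_D^Γ = {a ∈ ℂ^r : □_D^r(a ⊗ v) = 0 for all v}`. -/
def annD {r n : ℕ} (D : Matrix (Fin r) (Fin n) ℂ) : Submodule ℂ (Fin r → ℂ) where
  carrier := {a | ∀ v, boxD D a v = 0}
  add_mem' := by
    intro a b ha hb v
    funext j
    have h1 := congrFun (ha v) j
    have h2 := congrFun (hb v) j
    simp only [boxD, Pi.zero_apply] at h1 h2 ⊢
    simp only [Pi.add_apply, add_mul, Finset.sum_add_distrib]
    rw [h1, h2, add_zero]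
  zero_mem' := by
    intro v
    funext j
    simp [boxD]
  smul_mem' := by
    intro c a ha v
    funext j
    have h := congrFun (ha v) j
    simp only [boxD, Pi.zero_apply] at h ⊢
    have hsum : ∑ i, (c • a) i * D i j = c * ∑ i, a i * D i j := by
      rw [Finset.mul_sum]
      refine Finset.sum_congr rfl fun i _ => ?_
      simp [mul_assoc]
    rw [hsum, mul_assoc, h, mul_zero]


/-- If pentads of Cartan type `P(r,n;A,D,Γ)` and `P(r',n';A',D',Γ')` with
`rank D = n`, `rank D' = n'` are equivalent, then `r = r'`, `n = n'`, and there are a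
nonzero `c`, a permutation `π` and an invertible `T` with `A = (1/c)·ᵗT⁻¹·A'·T⁻¹` and
`D = T·D'·ᵗE_π`. -/
theorem stmt_11 (r n r' n' : ℕ) (hr : 0 < r) (hn : 0 < n) (hr' : 0 < r') (hn' : 0 < n')
    (A : Matrix (Fin r) (Fin r) ℂ) (hA : IsUnit A.det)
    (D : Matrix (Fin r) (Fin n) ℂ)
    (γ : Fin n → ℂ) (hγ : ∀ j, γ j ≠ 0)
    (A' : Matrix (Fin r') (Fin r') ℂ) (hA' : IsUnit A'.det)
    (D' : Matrix (Fin r') (Fin n') ℂ)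
    (γ' : Fin n' → ℂ) (hγ' : ∀ j, γ' j ≠ 0)
    (hD : D.rank = n) (hD' : D'.rank = n')
    -- the pentads are equivalent:
    (c₀ : ℂ) (hc₀ : c₀ ≠ 0)
    (τ : (Fin r → ℂ) ≃ₗ[ℂ] (Fin r' → ℂ))
    (σ : (Fin n → ℂ) ≃ₗ[ℂ] (Fin n' → ℂ))
    (ς : (Fin n → ℂ) ≃ₗ[ℂ] (Fin n' → ℂ))
    (hσ : ∀ (a : Fin r → ℂ) (v : Fin n → ℂ), σ (boxD D a v) = boxD D' (τ a) (σ v))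
    (hς : ∀ (a : Fin r → ℂ) (φ : Fin n → ℂ), ς (boxNegD D a φ) = boxNegD D' (τ a) (ς φ))
    (hτB : ∀ a b : Fin r → ℂ, bilinA A a b = c₀ * bilinA A' (τ a) (τ b))
    (hpair : ∀ (v φ : Fin n → ℂ), pairG γ v φ = pairG γ' (σ v) (ς φ)) :
    ∃ (hrr : r = r') (hnn : n = n') (c : ℂ), c ≠ 0 ∧
      ∃ (π : Equiv.Perm (Fin n)) (T : Matrix (Fin r) (Fin r) ℂ),
        IsUnit T.det ∧
        A = c⁻¹ • ((Tᵀ)⁻¹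
            * (Matrix.reindex (finCongr hrr.symm) (finCongr hrr.symm) A') * T⁻¹) ∧
        D = T * (Matrix.reindex (finCongr hrr.symm) (finCongr hnn.symm) D') * (permMat π)ᵀ := by
  have hrr : r = r' := by simpa using τ.finrank_eq
  have hnn : n = n' := by simpa using σ.finrank_eq
  subst hrr; subst hnn
  refine ⟨rfl, rfl, ?_⟩
  simp only [finCongr_refl, Matrix.reindex_refl_refl]
  refine ?_
  classical
  -- the matrix of τ
  set M : Matrix (Fin r) (Fin r) ℂ :=
    LinearMap.toMatrix' (τ : (Fin r → ℂ) →ₗ[ℂ] (Fin r → ℂ)) with hM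
  have hτa : ∀ a, τ a = M *ᵥ a := by
    intro a
    rw [hM, ← Matrix.toLin'_apply, Matrix.toLin'_toMatrix']
    rfl
  have hMN : M * LinearMap.toMatrix' (τ.symm : (Fin r → ℂ) →ₗ[ℂ] (Fin r → ℂ)) = 1 := by
    rw [hM, ← LinearMap.toMatrix'_comp]
    have h1 : (τ : (Fin r → ℂ) →ₗ[ℂ] (Fin r → ℂ)) ∘ₗ (τ.symm : (Fin r → ℂ) →ₗ[ℂ] (Fin r → ℂ))
        = LinearMap.id := by ext v; simp
    rw [h1, LinearMap.toMatrix'_id]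
  have hMdet : IsUnit M.det := Matrix.isUnit_det_of_right_inverse hMN
  -- surjectivity of Dᵀ *ᵥ ·
  have hsurj : Function.Surjective (Dᵀ.mulVecLin) := by
    rw [← LinearMap.range_eq_top]
    apply Submodule.eq_top_of_finrank_eq
    have h1 : Dᵀ.rank = n := by rw [Matrix.rank_transpose, hD]
    rw [show Module.finrank ℂ (LinearMap.range Dᵀ.mulVecLin) = Dᵀ.rank from rfl, h1]
    simp
  have hbox : ∀ (E : Matrix (Fin r) (Fin n) ℂ) (a : Fin r → ℂ) (v : Fin n → ℂ) (j : Fin n),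
      boxD E a v j = (Eᵀ *ᵥ a) j * v j := by
    intro E a v j
    simp [boxD, Matrix.mulVec, dotProduct, Matrix.transpose_apply, mul_comm]
  choose a ha using fun j => hsurj (Pi.single j 1)
  have ha' : ∀ j, Dᵀ *ᵥ a j = Pi.single j 1 := by
    intro j; rw [← Matrix.mulVecLin_apply]; exact ha j
  -- eb j := j-th basis vector
  let eb : Fin n → (Fin n → ℂ) := fun j => Pi.single j 1
  let w : Fin n → (Fin n → ℂ) := fun j => D'ᵀ *ᵥ (τ (a j))
  have factA : ∀ j k, w j k * σ (eb j) k = σ (eb j) k := by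
    intro j k
    have h := congrFun (hσ (a j) (eb j)) k
    rw [hbox] at h
    have h2 : boxD D (a j) (eb j) = eb j := by
      funext l
      rw [hbox, ha' j]
      show (Pi.single j 1 : Fin n → ℂ) l * (Pi.single j 1 : Fin n → ℂ) l
        = (Pi.single j 1 : Fin n → ℂ) l
      rcases eq_or_ne l j with hl | hl <;> simp [Pi.single_apply, hl]
    rw [h2] at h
    exact h.symm
  have factB : ∀ j j', j ≠ j' → ∀ k, w j k * σ (eb j') k = 0 := by
    intro j j' hne k
    have h := congrFun (hσ (a j) (eb j')) k
    rw [hbox] at h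
    have h2 : boxD D (a j) (eb j') = 0 := by
      funext l
      rw [hbox, ha' j]
      show (Pi.single j 1 : Fin n → ℂ) l * (Pi.single j' 1 : Fin n → ℂ) l = (0 : Fin n → ℂ) l
      rcases eq_or_ne l j with hl | hl
      · subst hl
        simp [Pi.single_apply, hne]
      · simp [Pi.single_apply, hl]
    rw [h2, _root_.map_zero] at h
    exact h.symm
  -- supports
  set S : Fin n → Finset (Fin n) := fun j => Finset.univ.filter (fun k => σ (eb j) k ≠ 0) with hS
  have hmemS : ∀ j k, k ∈ S j ↔ σ (eb j) k ≠ 0 := by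
    intro j k; simp [hS]
  have hne : ∀ j, (S j).Nonempty := by
    intro j
    have hne0 : σ (eb j) ≠ 0 := by
      intro h0
      have h1 : eb j = 0 := σ.injective (by rw [h0, _root_.map_zero])
      have h2 := congrFun h1 j
      have h3 : eb j j = 1 := by simp [eb]
      rw [h3] at h2
      exact one_ne_zero h2
    rcases Function.ne_iff.mp hne0 with ⟨k, hk⟩
    exact ⟨k, (hmemS j k).mpr (by simpa using hk)⟩
  have hdisj : ∀ j j', j ≠ j' → Disjoint (S j) (S j') := by
    intro j j' hjj
    rw [Finset.disjoint_left]
    intro k hk hk'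
    have h1 : w j k = 1 := by
      have h := factA j k
      have hkne := (hmemS j k).mp hk
      have := mul_right_cancel₀ hkne (by rw [h, one_mul] : w j k * σ (eb j) k = 1 * σ (eb j) k)
      exact this
    have h0 : w j k = 0 := by
      have h := factB j j' hjj k
      have hkne := (hmemS j' k).mp hk'
      rcases mul_eq_zero.mp h with h' | h'
      · exact h'
      · exact absurd h' hkne
    rw [h1] at h0; exact one_ne_zero h0
  have hcard : ∀ j, (S j).card = 1 := by
    have hsum : ∑ j, (S j).card ≤ n := by
      rw [← Finset.card_biUnion (fun j _ j' _ h => hdisj j j' h)]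
      simpa using Finset.card_le_univ (Finset.univ.biUnion S)
    intro j
    by_contra hj
    have h2 : 2 ≤ (S j).card := by
      have := Finset.card_pos.mpr (hne j); omega
    have hge : ∀ j', 1 + (if j' = j then 1 else 0) ≤ (S j').card := by
      intro j'
      by_cases h : j' = j
      · subst h; simpa using h2
      · simpa [h] using Finset.card_pos.mpr (hne j')
    have hle : ∑ j', (1 + (if j' = j then 1 else 0)) ≤ ∑ j', (S j').card :=
      Finset.sum_le_sum (fun j' _ => hge j')
    simp [Finset.sum_add_distrib] at hle
    omega
  choose π0 hπ0 using fun j => Finset.card_eq_one.mp (hcard j)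
  have hmem0 : ∀ j k, σ (eb j) k ≠ 0 ↔ k = π0 j := by
    intro j k
    rw [← hmemS, hπ0 j, Finset.mem_singleton]
  have hπinj : Function.Injective π0 := by
    intro j j' h
    by_contra hne'
    have h1 : π0 j ∈ S j := by rw [hπ0]; exact Finset.mem_singleton_self _
    have h2 : π0 j ∈ S j' := by rw [h, hπ0]; exact Finset.mem_singleton_self _
    exact Finset.disjoint_left.mp (hdisj j j' hne') h1 h2
  set π : Equiv.Perm (Fin n) := Equiv.ofBijective π0 (Finite.injective_iff_bijective.mp hπinj)
    with hπdef
  have hπ : ∀ j, π j = π0 j := fun j => rfl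
  -- eigenvalue relation
  have key : ∀ (b : Fin r → ℂ) (j : Fin n), (Dᵀ *ᵥ b) j = (D'ᵀ *ᵥ (M *ᵥ b)) (π0 j) := by
    intro b j
    have hb : boxD D b (eb j) = ((Dᵀ *ᵥ b) j) • eb j := by
      funext l
      rw [hbox]
      show (Dᵀ *ᵥ b) l * (Pi.single j 1 : Fin n → ℂ) l
        = (Dᵀ *ᵥ b) j * (Pi.single j 1 : Fin n → ℂ) l
      rcases eq_or_ne l j with hl | hl <;> simp [Pi.single_apply, hl]
    have h := congrFun (hσ b (eb j)) (π0 j)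
    rw [hb, σ.map_smul] at h
    rw [hbox] at h
    have hne0 : σ (eb j) (π0 j) ≠ 0 := (hmem0 j (π0 j)).mpr rfl
    have h' : (Dᵀ *ᵥ b) j * σ (eb j) (π0 j) = (D'ᵀ *ᵥ τ b) (π0 j) * σ (eb j) (π0 j) := by
      simpa [mul_comm] using h
    have := mul_right_cancel₀ hne0 h'
    rwa [hτa] at this
  -- D identity
  have hDid : D = Mᵀ * D' * (permMat π)ᵀ := by
    ext i j
    have h := key (Pi.single i 1) j
    rw [Matrix.mulVec_mulVec, Matrix.mulVec_single_one, Matrix.mulVec_single_one] at h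
    simp only [mul_one, Matrix.col_apply] at h
    have hl : Dᵀ j i = D i j := rfl
    rw [hl] at h
    rw [h]
    simp only [Matrix.mul_apply, Matrix.transpose_apply, permMat, hπ, mul_ite, mul_one,
      mul_zero, Finset.sum_ite_eq', Finset.mem_univ, if_true]
    exact Finset.sum_congr rfl fun x _ => mul_comm _ _
  -- A identity
  have hAinvT : (A⁻¹)ᵀ = c₀ • (Mᵀ * (A'⁻¹)ᵀ * M) := by
    ext i k
    have h := hτB (Pi.single i 1) (Pi.single k 1)
    simp only [bilinA, hτa] at h
    rw [Matrix.mulVec_mulVec, Matrix.mulVec_single_one, Matrix.mulVec_single_one,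
      Matrix.mulVec_single_one] at h
    simp only [mul_one, dotProduct, Matrix.col_apply] at h
    simp only [dotProduct, Pi.single_apply, ite_mul, one_mul, zero_mul,
      Finset.sum_ite_eq', Finset.mem_univ, if_true] at h
    rw [h]
    have hMAM : (∑ x, M x i * ((A'⁻¹)ᵀ * M) x k) = (Mᵀ * ((A'⁻¹)ᵀ * M)) i k := by
      simp [Matrix.mul_apply]
    rw [hMAM, ← Matrix.mul_assoc]
    simp
  have hAinv : A⁻¹ = c₀ • (Mᵀ * A'⁻¹ * M) := by
    have h := congrArg Matrix.transpose hAinvT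
    rw [Matrix.transpose_transpose] at h
    rw [h, Matrix.transpose_smul, Matrix.transpose_mul, Matrix.transpose_mul,
      Matrix.transpose_transpose, Matrix.transpose_transpose, Matrix.mul_assoc]
  refine ⟨c₀, hc₀, π, Mᵀ, ?_, ?_, ?_⟩
  · rwa [Matrix.det_transpose]
  · have hTT : (Mᵀ)ᵀ = M := Matrix.transpose_transpose M
    rw [hTT]
    have hMTdet : IsUnit (Mᵀ).det := by rwa [Matrix.det_transpose]
    have h2 : A⁻¹ * (c₀⁻¹ • (M⁻¹ * A' * (Mᵀ)⁻¹)) = 1 := by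
      rw [hAinv, Matrix.smul_mul, Matrix.mul_smul, smul_smul, mul_inv_cancel₀ hc₀, one_smul]
      have e1 : M * (M⁻¹ * (A' * (Mᵀ)⁻¹)) = A' * (Mᵀ)⁻¹ := by
        rw [← Matrix.mul_assoc, Matrix.mul_nonsing_inv M hMdet, Matrix.one_mul]
      have e2 : A'⁻¹ * (A' * (Mᵀ)⁻¹) = (Mᵀ)⁻¹ := by
        rw [← Matrix.mul_assoc, Matrix.nonsing_inv_mul A' hA', Matrix.one_mul]
      calc Mᵀ * A'⁻¹ * M * (M⁻¹ * A' * (Mᵀ)⁻¹)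
          = Mᵀ * (A'⁻¹ * (M * (M⁻¹ * (A' * (Mᵀ)⁻¹)))) := by
            simp only [Matrix.mul_assoc]
        _ = Mᵀ * (Mᵀ)⁻¹ := by rw [e1, e2]
        _ = 1 := Matrix.mul_nonsing_inv _ hMTdet
    have h3 := Matrix.inv_eq_right_inv h2
    rw [Matrix.nonsing_inv_nonsing_inv A hA] at h3
    exact h3
  · exact hDid


end
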